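/- Let a be a binary vector and let g_1, g_2, b ∈ F2[x] be binary polynomials with g_1 ≠ 0 and b ≠ 0, g_1 dividing x^n − a(x) with deg g_1 = t_2, b dividing x^n − a(x) with deg b = t_1, deg g_2 < deg b, and b dividing ((x^n − a(x))/g_1)·g_2. If C is the F2[x]-submodule of R_n generated by α g_1 + g_2 and b, then C has exactly 2^{n − t_1}·2^{n − t_2} elements. -/

import Mathlib

open Polynomial

noncomputable section

abbrev F4 : Type := GaloisField 2 2

def IsBin (z : F4) : Prop := z = 0 ∨ z = 1

def IsBinVec {n : ℕ} (a : Fin n → F4) : Prop := ∀ i, IsBin (a i)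

def IsBinPoly (p : Polynomial F4) : Prop := ∀ i, IsBin (p.coeff i)

def polyOfVec {n : ℕ} (c : Fin n → F4) : Polynomial F4 :=
  ∑ i : Fin n, Polynomial.C (c i) * X ^ (i : ℕ)

def rightShift {n : ℕ} (a c : Fin n → F4) : Fin n → F4 := fun i =>
  (if (i : ℕ) = 0 then 0 else c ⟨(i : ℕ) - 1, lt_of_le_of_lt (Nat.sub_le _ _) i.isLt⟩)
    + c ⟨n - 1, Nat.sub_lt i.pos Nat.one_pos⟩ * a i

def leftShift {n : ℕ} (a c : Fin n → F4) : Fin n → F4 := fun i =>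
  (if h : (i : ℕ) + 1 < n then c ⟨(i : ℕ) + 1, h⟩ else 0) + c ⟨0, i.pos⟩ * a i

def seqShift {n : ℕ} (a c : Fin n → F4) : Fin n → F4 := fun i =>
  if h : (i : ℕ) + 1 < n then c ⟨(i : ℕ) + 1, h⟩ else ∑ j, a j * c j

def IsRightPolycyclic {n : ℕ} (a : Fin n → F4) (C : AddSubgroup (Fin n → F4)) : Prop :=
  ∀ c ∈ C, rightShift a c ∈ C

def IsLeftPolycyclic {n : ℕ} (a : Fin n → F4) (C : AddSubgroup (Fin n → F4)) : Prop :=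
  ∀ c ∈ C, leftShift a c ∈ C

def quotMk {n : ℕ} (a : Fin n → F4) :
    Polynomial F4 →+* Polynomial F4 ⧸ Ideal.span {X ^ n - polyOfVec a} :=
  Ideal.Quotient.mk _

def codeImage {n : ℕ} (a : Fin n → F4) (C : AddSubgroup (Fin n → F4)) :
    Set (Polynomial F4 ⧸ Ideal.span {X ^ n - polyOfVec a}) :=
  (fun c => quotMk a (polyOfVec c)) '' (C : Set (Fin n → F4))

namespace Aux15

abbrev K2 := ZMod 2

noncomputable def emb : K2 →+* F4 := algebraMap K2 F4

noncomputable def phi : Polynomial K2 →+* Polynomial F4 := Polynomial.mapRingHom emb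

lemma k2_cases (c : K2) : c = 0 ∨ c = 1 := by revert c; decide

lemma emb_inj : Function.Injective emb := emb.injective

lemma phi_inj : Function.Injective phi :=
  Polynomial.map_injective emb emb_inj

lemma phi_degree (P : Polynomial K2) : (phi P).degree = P.degree :=
  Polynomial.degree_map_eq_of_injective emb_inj P

lemma phi_natDegree (P : Polynomial K2) : (phi P).natDegree = P.natDegree :=
  Polynomial.natDegree_map_eq_of_injective emb_inj P

lemma isBin_emb (c : K2) : IsBin (emb c) := by
  rcases k2_cases c with h | h <;> subst h
  · left; simp
  · right; simp

lemma isBinPoly_phi (P : Polynomial K2) : IsBinPoly (phi P) := by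
  intro i
  have : (phi P).coeff i = emb (P.coeff i) := Polynomial.coeff_map _ _
  rw [this]; exact isBin_emb _

noncomputable def toK2 (p : Polynomial F4) : Polynomial K2 := ∑ i ∈ p.support, X ^ i

lemma phi_toK2 (p : Polynomial F4) (h : IsBinPoly p) : phi (toK2 p) = p := by
  conv_rhs => rw [p.as_sum_support_C_mul_X_pow]
  rw [toK2, map_sum]
  refine Finset.sum_congr rfl fun i hi => ?_
  rcases h i with h0 | h1
  · exact absurd h0 (Polynomial.mem_support_iff.mp hi)
  · rw [h1, Polynomial.C_1, one_mul, map_pow]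
    simp [phi]

noncomputable def Fr : Polynomial F4 →+* Polynomial F4 := Polynomial.mapRingHom (frobenius F4 2)

lemma Fr_coeff (p : Polynomial F4) (i : ℕ) : (Fr p).coeff i = (p.coeff i) ^ 2 := by
  simp [Fr, Polynomial.coeff_map, frobenius_def]

lemma pow4 (c : F4) : c ^ 4 = c := by
  letI : Fintype F4 := Fintype.ofFinite F4
  have := FiniteField.pow_card c
  rwa [← Nat.card_eq_fintype_card, GaloisField.card 2 2 (by norm_num)] at this

lemma Fr_Fr (p : Polynomial F4) : Fr (Fr p) = p := by
  ext i
  rw [Fr_coeff, Fr_coeff, ← pow_mul]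
  exact pow4 _

lemma isBin_of_sq (z : F4) (h : z ^ 2 = z) : IsBin z := by
  have h2 : z * (z - 1) = 0 := by linear_combination h
  rcases mul_eq_zero.mp h2 with h | h
  · left; exact h
  · right; linear_combination h

lemma sq_of_isBin (z : F4) (h : IsBin z) : z ^ 2 = z := by
  rcases h with h | h <;> subst h <;> ring

lemma Fr_of_bin (p : Polynomial F4) (h : IsBinPoly p) : Fr p = p := by
  ext i; rw [Fr_coeff]; exact sq_of_isBin _ (h i)

lemma bin_of_Fr (p : Polynomial F4) (h : Fr p = p) : IsBinPoly p := fun i =>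
  isBin_of_sq _ (by rw [← Fr_coeff, h])

lemma Fr_phi (P : Polynomial K2) : Fr (phi P) = phi P :=
  Fr_of_bin _ (isBinPoly_phi P)

lemma Fr_C (c : F4) : Fr (Polynomial.C c) = Polynomial.C (c ^ 2) := by
  simp [Fr, frobenius_def]

lemma monic_k2 (P : Polynomial K2) (h : P ≠ 0) : P.Monic := by
  have hl := Polynomial.leadingCoeff_ne_zero.mpr h
  rcases k2_cases P.leadingCoeff with h0 | h1
  · exact absurd h0 hl
  · exact h1

lemma card_degreeLT (d : ℕ) : Nat.card (Polynomial.degreeLT K2 d) = 2 ^ d := by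
  rw [Nat.card_congr (Polynomial.degreeLTEquiv K2 d).toEquiv]
  simp [Nat.card_fun, Nat.card_zmod]

lemma two_eq_zero_F4 : (2 : F4) = 0 := by
  have := CharP.cast_eq_zero F4 2
  exact_mod_cast this

lemma two_eq_zero_polyF4 : (2 : Polynomial F4) = 0 := by
  have h : (2 : Polynomial F4) = Polynomial.C (2 : F4) := by
    rw [show (2 : F4) = ((2 : ℕ) : F4) by norm_num, Polynomial.C_eq_natCast]
    norm_num
  rw [h, two_eq_zero_F4, map_zero]

lemma isBin_add (z w : F4) (hz : IsBin z) (hw : IsBin w) : IsBin (z + w) := by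
  rcases hz with h | h <;> rcases hw with h' | h' <;> subst h <;> subst h'
  · left; ring
  · right; ring
  · right; ring
  · left; linear_combination two_eq_zero_F4

end Aux15

namespace Aux15

lemma isBinPoly_polyOfVec {n : ℕ} (a : Fin n → F4) (ha : IsBinVec a) :
    IsBinPoly (polyOfVec a) := by
  intro k
  rw [polyOfVec, Polynomial.finset_sum_coeff]
  refine Finset.sum_induction _ IsBin (fun x y => isBin_add x y) (Or.inl rfl) ?_
  intro i _
  rw [Polynomial.coeff_C_mul, Polynomial.coeff_X_pow]
  split_ifs
  · rw [mul_one]; exact ha i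
  · rw [mul_zero]; exact Or.inl rfl

lemma degree_polyOfVec_lt {n : ℕ} (hn : 0 < n) (a : Fin n → F4) :
    (polyOfVec a).degree < (n : WithBot ℕ) := by
  rw [polyOfVec]
  apply lt_of_le_of_lt (Polynomial.degree_sum_le _ _)
  rw [Finset.sup_lt_iff (show (⊥ : WithBot ℕ) < (n : WithBot ℕ) from WithBot.bot_lt_coe n)]
  intro i _
  apply lt_of_le_of_lt (Polynomial.degree_C_mul_X_pow_le _ _)
  exact_mod_cast i.isLt

end Aux15

open Aux15 in
/-- if `g1 ≠ 0`, `b ≠ 0` are binary with `g1 ∣ x^n - a(x)`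
(quotient `qg`, `deg g1 = t2`), `b ∣ x^n - a(x)` (quotient `qb`,
`deg b = t1`), `deg g2 < deg b`, and `b ∣ ((x^n - a(x))/g1) · g2 = qg · g2` in
`F2[x]`, then the `F2[x]`-submodule of `R_n` generated by `α g1 + g2` and `b`
has exactly `2^(n - t1) · 2^(n - t2)` elements. -/
theorem stmt_15 (n : ℕ) (hn : 0 < n) (a : Fin n → F4) (ha : IsBinVec a)
    (α : F4) (hα : α ^ 2 + α + 1 = 0)
    (g1 g2 b : Polynomial F4)
    (hg1bin : IsBinPoly g1) (hg2bin : IsBinPoly g2) (hbbin : IsBinPoly b)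
    (hg1ne : g1 ≠ 0) (hbne : b ≠ 0)
    (qg : Polynomial F4) (hqgbin : IsBinPoly qg) (hqg : qg * g1 = X ^ n - polyOfVec a)
    (qb : Polynomial F4) (hqbbin : IsBinPoly qb) (hqb : qb * b = X ^ n - polyOfVec a)
    (t1 t2 : ℕ) (ht1 : b.natDegree = t1) (ht2 : g1.natDegree = t2)
    (hg2deg : g2.degree < b.degree)
    (r : Polynomial F4) (hrbin : IsBinPoly r) (hr : qg * g2 = b * r) :
    Set.ncard {y : Polynomial F4 ⧸ Ideal.span {X ^ n - polyOfVec a} |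
        ∃ f1 f2 : Polynomial F4, IsBinPoly f1 ∧ IsBinPoly f2 ∧
          y = quotMk a (f1 * (Polynomial.C α * g1 + g2) + f2 * b)}
      = 2 ^ (n - t1) * 2 ^ (n - t2) := by
  classical
  have h2 : (2 : F4) = 0 := two_eq_zero_F4
  have hp2 : (2 : Polynomial F4) = 0 := two_eq_zero_polyF4
  have hα1 : α + α ^ 2 = 1 := by linear_combination hα - h2
  set m : Polynomial F4 := X ^ n - polyOfVec a with hm
  have hπ : ∀ p q : Polynomial F4,
      quotMk a p = quotMk a q ↔ p - q ∈ Ideal.span {m} := fun p q => Ideal.Quotient.eq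
  have hmdeg : m.degree = (n : WithBot ℕ) := by
    rw [hm, Polynomial.degree_sub_eq_left_of_degree_lt, Polynomial.degree_X_pow]
    rw [Polynomial.degree_X_pow]
    exact degree_polyOfVec_lt hn a
  have hmne : m ≠ 0 := by
    intro h
    rw [h, Polynomial.degree_zero] at hmdeg
    exact absurd hmdeg (by simp)
  -- preimages in K2[x]
  obtain ⟨A, hA⟩ : ∃ P, phi P = polyOfVec a := ⟨_, phi_toK2 _ (isBinPoly_polyOfVec a ha)⟩
  obtain ⟨G1, hG1⟩ : ∃ P, phi P = g1 := ⟨_, phi_toK2 _ hg1bin⟩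
  obtain ⟨G2, hG2⟩ : ∃ P, phi P = g2 := ⟨_, phi_toK2 _ hg2bin⟩
  obtain ⟨B, hB⟩ : ∃ P, phi P = b := ⟨_, phi_toK2 _ hbbin⟩
  obtain ⟨QG, hQG⟩ : ∃ P, phi P = qg := ⟨_, phi_toK2 _ hqgbin⟩
  obtain ⟨QB, hQB⟩ : ∃ P, phi P = qb := ⟨_, phi_toK2 _ hqbbin⟩
  obtain ⟨R, hR⟩ : ∃ P, phi P = r := ⟨_, phi_toK2 _ hrbin⟩
  set M : Polynomial K2 := X ^ n - A with hMdef
  have hM : phi M = m := by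
    rw [hMdef, map_sub, map_pow, hm, hA]
    congr 1
    simp [phi]
  -- transported relations
  have hQG1 : QG * G1 = M := phi_inj (by rw [map_mul, hQG, hG1, hM]; exact hqg)
  have hQB1 : QB * B = M := phi_inj (by rw [map_mul, hQB, hB, hM]; exact hqb)
  have hQG2 : QG * G2 = B * R := phi_inj (by rw [map_mul, map_mul, hQG, hG2, hB, hR]; exact hr)
  -- nonzero
  have hG1ne : G1 ≠ 0 := fun h => hg1ne (by rw [← hG1, h, map_zero])
  have hBne' : B ≠ 0 := fun h => hbne (by rw [← hB, h, map_zero])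
  have hMne : M ≠ 0 := fun h => hmne (by rw [← hM, h, map_zero])
  have hQGne : QG ≠ 0 := fun h => hMne (by rw [← hQG1, h, zero_mul])
  have hQBne : QB ≠ 0 := fun h => hMne (by rw [← hQB1, h, zero_mul])
  -- degrees
  have hMnat : M.natDegree = n := by
    have h1 : (phi M).degree = M.degree := phi_degree M
    rw [hM, hmdeg] at h1
    exact (Polynomial.natDegree_eq_of_degree_eq_some h1.symm)
  have hG1nat : G1.natDegree = t2 := by
    have := phi_natDegree G1
    rw [hG1, ht2] at this
    exact this.symm
  have hBnat : B.natDegree = t1 := by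
    have := phi_natDegree B
    rw [hB, ht1] at this
    exact this.symm
  have hQGnat : QG.natDegree = n - t2 := by
    have h1 := Polynomial.natDegree_mul hQGne hG1ne
    rw [hQG1, hMnat, hG1nat] at h1
    omega
  have hQBnat : QB.natDegree = n - t1 := by
    have h1 := Polynomial.natDegree_mul hQBne hBne'
    rw [hQB1, hMnat, hBnat] at h1
    omega
  have hQGdeg : QG.degree = ((n - t2 : ℕ) : WithBot ℕ) := by
    rw [Polynomial.degree_eq_natDegree hQGne, hQGnat]
  have hQBdeg : QB.degree = ((n - t1 : ℕ) : WithBot ℕ) := by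
    rw [Polynomial.degree_eq_natDegree hQBne, hQBnat]
  have hFrm : Fr m = m := by rw [← hM]; exact Fr_phi M
  -- the parametrization map and index set
  set u : Polynomial F4 := Polynomial.C α * g1 + g2 with hu
  set Φ : Polynomial K2 × Polynomial K2 →
      Polynomial F4 ⧸ Ideal.span {m} :=
    fun P => quotMk a (phi P.1 * u + phi P.2 * b) with hΦ
  set V : Set (Polynomial K2 × Polynomial K2) :=
    (Polynomial.degreeLT K2 (n - t2) : Set (Polynomial K2)) ×ˢ
      (Polynomial.degreeLT K2 (n - t1) : Set (Polynomial K2)) with hV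
  have hSeq : {y : Polynomial F4 ⧸ Ideal.span {m} |
        ∃ f1 f2 : Polynomial F4, IsBinPoly f1 ∧ IsBinPoly f2 ∧
          y = quotMk a (f1 * u + f2 * b)} = Φ '' V := by
    ext y
    constructor
    · rintro ⟨f1, f2, hb1, hb2, rfl⟩
      obtain ⟨F1, hF1⟩ : ∃ P, phi P = f1 := ⟨_, phi_toK2 _ hb1⟩
      obtain ⟨F2, hF2⟩ : ∃ P, phi P = f2 := ⟨_, phi_toK2 _ hb2⟩
      have hQGm : QG.Monic := monic_k2 _ hQGne
      have hQBm : QB.Monic := monic_k2 _ hQBne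
      set F1r := F1 %ₘ QG with hF1r
      set H := F1 /ₘ QG with hH
      have e1 : F1r + QG * H = F1 := Polynomial.modByMonic_add_div F1 QG
      set F2' := F2 + H * R with hF2'
      set F2r := F2' %ₘ QB with hF2r
      set K := F2' /ₘ QB with hK
      have e2 : F2r + QB * K = F2' := Polynomial.modByMonic_add_div F2' QB
      refine ⟨(F1r, F2r), ⟨?_, ?_⟩, ?_⟩
      · have := Polynomial.degree_modByMonic_lt F1 hQGm
        rw [hQGdeg] at this
        exact Polynomial.mem_degreeLT.mpr this
      · have := Polynomial.degree_modByMonic_lt F2' hQBm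
        rw [hQBdeg] at this
        exact Polynomial.mem_degreeLT.mpr this
      · show quotMk a (phi F1r * u + phi F2r * b) = quotMk a (f1 * u + f2 * b)
        rw [hπ, Ideal.mem_span_singleton]
        have e1f : f1 = qg * phi H + phi F1r := by
          rw [← hF1, ← hQG, ← map_mul, ← map_add]
          congr 1
          rw [← e1]; ring
        have e2f : f2 + phi H * r = qb * phi K + phi F2r := by
          rw [← hF2, ← hQB, ← hR, ← map_mul, ← map_mul, ← map_add, ← map_add]
          congr 1
          rw [← hF2', ← e2]; ring
        have key : f1 * u + f2 * b =
            phi F1r * u + phi F2r * b + m * (Polynomial.C α * phi H + phi K) := by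
          linear_combination u * e1f + b * e2f + (Polynomial.C α * phi H) * hqg +
            (phi H) * hr + (phi K) * hqb + (qg * phi H) * hu
        exact ⟨-(Polynomial.C α * phi H + phi K), by rw [key]; ring⟩
    · rintro ⟨⟨P1, P2⟩, _, rfl⟩
      exact ⟨phi P1, phi P2, isBinPoly_phi _, isBinPoly_phi _, rfl⟩
  have hinj : Set.InjOn Φ V := by
    rintro ⟨P1, P2⟩ ⟨hp1, hp2⟩ ⟨Q1, Q2⟩ ⟨hq1, hq2⟩ hEq
    have hp1' : P1 ∈ Polynomial.degreeLT K2 (n - t2) := hp1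
    have hp2' : P2 ∈ Polynomial.degreeLT K2 (n - t1) := hp2
    have hq1' : Q1 ∈ Polynomial.degreeLT K2 (n - t2) := hq1
    have hq2' : Q2 ∈ Polynomial.degreeLT K2 (n - t1) := hq2
    have hmem := (hπ _ _).mp hEq
    rw [Ideal.mem_span_singleton] at hmem
    obtain ⟨s, hs⟩ := hmem
    set D1 := P1 - Q1 with hD1
    set D2 := P2 - Q2 with hD2
    have hs' : phi D1 * (Polynomial.C α * g1 + g2) + phi D2 * b = m * s := by
      rw [hD1, hD2, map_sub, map_sub, ← hu]
      rw [← hs]; ring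
    have hsF : phi D1 * (Polynomial.C (α ^ 2) * g1 + g2) + phi D2 * b = m * Fr s := by
      have h3 := congrArg Fr hs'
      simpa only [map_add, map_mul, Fr_of_bin g1 hg1bin, Fr_of_bin g2 hg2bin,
        Fr_of_bin b hbbin, Fr_C, Fr_phi, hFrm] using h3
    have h1C : Polynomial.C α + Polynomial.C (α ^ 2) = (1 : Polynomial F4) := by
      rw [← Polynomial.C_add, hα1, Polynomial.C_1]
    have hbin1 : phi D1 * g1 = m * (s + Fr s) := by
      linear_combination hs' + hsF - (phi D1 * g1) * h1C -
        (phi D1 * g2 + phi D2 * b) * two_eq_zero_polyF4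
    have hbinS : IsBinPoly (s + Fr s) := bin_of_Fr _ (by rw [map_add, Fr_Fr]; ring)
    obtain ⟨S1, hS1⟩ : ∃ P, phi P = s + Fr s := ⟨_, phi_toK2 _ hbinS⟩
    have hDG : D1 * G1 = M * S1 :=
      phi_inj (by rw [map_mul, map_mul, hG1, hS1, hM]; exact hbin1)
    have hD1eq : D1 = QG * S1 := by
      have h' : D1 * G1 = QG * S1 * G1 := by rw [hDG, ← hQG1]; ring
      exact mul_right_cancel₀ hG1ne h'
    have hdD1 : D1.degree < ((n - t2 : ℕ) : WithBot ℕ) :=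
      Polynomial.mem_degreeLT.mp (Submodule.sub_mem _ hp1' hq1')
    have hS10 : S1 = 0 := by
      by_contra hS
      have hle : QG.degree ≤ (QG * S1).degree := Polynomial.degree_le_mul_left QG hS
      rw [← hD1eq, hQGdeg] at hle
      exact absurd hdD1 (not_lt.mpr hle)
    have hD10 : D1 = 0 := by rw [hD1eq, hS10, mul_zero]
    have hP1 : P1 = Q1 := by
      have := sub_eq_zero.mp (hD1 ▸ hD10)
      exact this
    -- second component
    have hs2 : phi D2 * b = m * s := by
      rw [← hs']
      rw [hD10, map_zero]
      ring
    have hs2F : phi D2 * b = m * Fr s := by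
      have h3 := congrArg Fr hs2
      simpa only [map_mul, Fr_of_bin b hbbin, Fr_phi, hFrm] using h3
    have hsfix : Fr s = s := by
      have h0 : m * (s - Fr s) = 0 := by linear_combination hs2F - hs2
      rcases mul_eq_zero.mp h0 with h | h
      · exact absurd h hmne
      · exact (sub_eq_zero.mp h).symm
    obtain ⟨S0, hS0⟩ : ∃ P, phi P = s := ⟨_, phi_toK2 _ (bin_of_Fr s hsfix)⟩
    have hDB : D2 * B = M * S0 :=
      phi_inj (by rw [map_mul, map_mul, hB, hS0, hM]; exact hs2)
    have hD2eq : D2 = QB * S0 := by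
      have h' : D2 * B = QB * S0 * B := by rw [hDB, ← hQB1]; ring
      exact mul_right_cancel₀ hBne' h'
    have hdD2 : D2.degree < ((n - t1 : ℕ) : WithBot ℕ) :=
      Polynomial.mem_degreeLT.mp (Submodule.sub_mem _ hp2' hq2')
    have hS00 : S0 = 0 := by
      by_contra hS
      have hle : QB.degree ≤ (QB * S0).degree := Polynomial.degree_le_mul_left QB hS
      rw [← hD2eq, hQBdeg] at hle
      exact absurd hdD2 (not_lt.mpr hle)
    have hP2 : P2 = Q2 := by
      have hD20 : D2 = 0 := by rw [hD2eq, hS00, mul_zero]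
      exact sub_eq_zero.mp (hD2 ▸ hD20)
    exact Prod.ext hP1 hP2
  rw [hSeq, Set.ncard_image_of_injOn hinj, hV]
  rw [← Nat.card_coe_set_eq, Nat.card_congr (Equiv.Set.prod _ _), Nat.card_prod]
  rw [show Nat.card ((Polynomial.degreeLT K2 (n - t2) : Set (Polynomial K2))) = 2 ^ (n - t2) from
    card_degreeLT (n - t2)]
  rw [show Nat.card ((Polynomial.degreeLT K2 (n - t1) : Set (Polynomial K2))) = 2 ^ (n - t1) from
    card_degreeLT (n - t1)]
  ring
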